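/- Let X be a topological space and λ a cardinal. Assume that every subset D ⊆ X that is discrete in the subspace topology has closure of cardinality at most λ. Then every right-separated subset of X has cardinality at most λ; that is, if S ⊆ X admits a well-ordering under which every initial segment of S is open in the subspace topology of S, then #S ≤ λ. -/

import Mathlib

open Cardinal Set Filter Topology

theorem rightSeparated_card_le_of_closure_discrete_card_le
    {X : Type u} [TopologicalSpace X] (lam : Cardinal.{u})
    (hg : ∀ D : Set X, DiscreteTopology D → #(closure D) ≤ lam) :
    ∀ S : Set X,
      (∃ r : S → S → Prop, IsWellOrder S r ∧ ∀ x : S, IsOpen {y : S | r y x}) →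
      #S ≤ lam := by
  rintro S ⟨r, hwo, hop⟩
  haveI := hwo
  have wf : WellFounded r := hwo.toIsWellFounded.wf
  set D : Set X := {x | ∃ (_ : x ∈ S) (U : Set X), IsOpen U ∧ x ∈ U ∧ U ∩ S = {x}} with hD
  have hDS : D ⊆ S := fun x hx => hx.1
  -- D is discrete as a subspace of X
  have hdisc : DiscreteTopology D := by
    rw [discreteTopology_iff_isOpen_singleton]
    rintro ⟨d, hds, U, hU, hdU, hUS⟩
    have : ({⟨d, hds, U, hU, hdU, hUS⟩} : Set D) = (↑· : D → X) ⁻¹' U := by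
      ext ⟨y, hy⟩
      simp only [Set.mem_singleton_iff, Set.mem_preimage]
      constructor
      · rintro h
        cases h
        exact hdU
      · intro hyU
        have : y ∈ U ∩ S := ⟨hyU, hDS hy⟩
        rw [hUS] at this
        exact Subtype.ext this
    rw [this]
    exact (continuous_subtype_val).isOpen_preimage U hU
  -- D is dense in S (in X)
  have hdense : S ⊆ closure D := by
    intro x hxS
    rw [mem_closure_iff]
    intro V hV hxV
    set T : Set S := {y | (y : X) ∈ V} with hT
    have hTne : T.Nonempty := ⟨⟨x, hxS⟩, hxV⟩
    set t : S := wf.min T hTne with ht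
    have htT : t ∈ T := wf.min_mem T hTne
    have hmin : ∀ y ∈ T, ¬ r y t := fun y hy => wf.not_lt_min T hy
    -- find an open set A of S containing t whose elements are ≤ t
    have key : ∃ A : Set S, IsOpen A ∧ t ∈ A ∧ ∀ y ∈ A, r y t ∨ y = t := by
      by_cases hs : ∃ y, r t y
      · set s : S := wf.min {y | r t y} hs with hsdef
        refine ⟨{y | r y s}, hop s, ?_, ?_⟩
        · exact wf.min_mem {y | r t y} hs
        · intro y hy
          rcases trichotomous_of r y t with h | h | h
          · exact Or.inl h
          · exact Or.inr h
          · exact absurd hy (wf.not_lt_min {y | r t y} h)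
      · refine ⟨Set.univ, isOpen_univ, Set.mem_univ _, fun y _ => ?_⟩
        rcases trichotomous_of r y t with h | h | h
        · exact Or.inl h
        · exact Or.inr h
        · exact (hs ⟨y, h⟩).elim
    obtain ⟨A, hAopen, htA, hAle⟩ := key
    rw [isOpen_induced_iff] at hAopen
    obtain ⟨W, hW, hWA⟩ := hAopen
    have htD : (t : X) ∈ D := by
      refine ⟨t.2, V ∩ W, hV.inter hW, ⟨htT, ?_⟩, ?_⟩
      · have : t ∈ (↑· : S → X) ⁻¹' W := hWA ▸ htA
        exact this
      · ext y
        constructor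
        · rintro ⟨⟨hyV, hyW⟩, hyS⟩
          have hyA : (⟨y, hyS⟩ : S) ∈ A := by
            rw [← hWA]; exact hyW
          rcases hAle _ hyA with h | h
          · exact absurd h (hmin ⟨y, hyS⟩ hyV)
          · exact congrArg Subtype.val h
        · rintro rfl
          refine ⟨⟨htT, ?_⟩, t.2⟩
          have : t ∈ (↑· : S → X) ⁻¹' W := hWA ▸ htA
          exact this
    exact ⟨t, htT, htD⟩
  calc #S ≤ #(closure D) := Cardinal.mk_le_mk_of_subset hdense
    _ ≤ lam := hg D hdisc
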